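/- For 0 < q < 1 and all complex w, A_q(w) = (-wq^{3/2};q)_∞ ∑_{n=0}^∞ q^{n(3n+1)/4}(-w)^n / ((q^{1/2};q^{1/2})_n (-wq^{3/2};q)_n), provided the denominators are nonzero. -/

import Mathlib

noncomputable def qpC (q a : ℂ) (n : ℕ) : ℂ := ∏ k ∈ Finset.range n, (1 - a * q ^ k)

noncomputable def qpiC (q a : ℂ) : ℂ := ∏' k : ℕ, (1 - a * q ^ k)

noncomputable def Aq (q : ℝ) (z : ℂ) : ℂ :=
  ∑' k : ℕ, (q : ℂ) ^ (k ^ 2) * (-z) ^ k / qpC (q : ℂ) (q : ℂ) k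

open Filter Topology Finset Complex

namespace AqAux

/-- triangular number -/
def tri (n : ℕ) : ℕ := n * (n - 1) / 2

lemma tri_mul_two (n : ℕ) : tri n * 2 = n * (n - 1) := by
  apply Nat.div_mul_cancel
  rcases Nat.even_or_odd n with h | h
  · exact Dvd.dvd.mul_right h.two_dvd _
  · rcases n with _ | m
    · simp
    · exact Dvd.dvd.mul_left (Nat.Odd.sub_odd h odd_one).two_dvd _

lemma tri_succ (n : ℕ) : tri (n + 1) = tri n + n := by
  apply Nat.eq_of_mul_eq_mul_right (show 0 < 2 by norm_num)
  rw [tri_mul_two]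
  conv_rhs => rw [add_mul, tri_mul_two]
  rcases n with _ | m
  · simp
  · simp only [Nat.add_sub_cancel]
    ring

lemma qpC_succ (q a : ℂ) (n : ℕ) : qpC q a (n + 1) = qpC q a n * (1 - a * q ^ n) :=
  Finset.prod_range_succ _ _

lemma qpC_zero (q a : ℂ) : qpC q a 0 = 1 := rfl

/-- real partial product -/
noncomputable def rp (b : ℝ) (n : ℕ) : ℝ := ∏ k ∈ Finset.range n, (1 - b * b ^ k)

lemma rp_pos {b : ℝ} (hb0 : 0 ≤ b) (hb1 : b < 1) (n : ℕ) : 0 < rp b n := by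
  apply Finset.prod_pos
  intro k _
  have : b * b ^ k ≤ b * 1 := by
    apply mul_le_mul_of_nonneg_left _ hb0
    exact pow_le_one₀ hb0 hb1.le
  nlinarith

lemma rp_le_one {b : ℝ} (hb0 : 0 ≤ b) (hb1 : b < 1) (n : ℕ) : rp b n ≤ 1 := by
  apply Finset.prod_le_one
  · intro k _
    have : b * b ^ k ≤ b * 1 := by
      apply mul_le_mul_of_nonneg_left _ hb0
      exact pow_le_one₀ hb0 hb1.le
    nlinarith
  · intro k _
    nlinarith [pow_nonneg hb0 k, mul_nonneg hb0 (pow_nonneg hb0 k)]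

lemma one_sub_pow_le_rp {b : ℝ} (hb0 : 0 ≤ b) (hb1 : b < 1) (n : ℕ) :
    (1 - b) ^ n ≤ rp b n := by
  unfold rp
  calc (1 - b) ^ n = ∏ _k ∈ Finset.range n, (1 - b) := by
        rw [Finset.prod_const, Finset.card_range]
    _ ≤ ∏ k ∈ Finset.range n, (1 - b * b ^ k) := by
        apply Finset.prod_le_prod
        · intro k _; linarith
        · intro k _
          have : b * b ^ k ≤ b * 1 := by
            apply mul_le_mul_of_nonneg_left _ hb0
            exact pow_le_one₀ hb0 hb1.le
          linarith

lemma qpC_real (b : ℝ) (n : ℕ) : qpC (b : ℂ) (b : ℂ) n = ((rp b n : ℝ) : ℂ) := by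
  unfold qpC rp
  push_cast
  rfl

lemma norm_qpC_real {b : ℝ} (hb0 : 0 ≤ b) (hb1 : b < 1) (n : ℕ) :
    ‖qpC (b : ℂ) (b : ℂ) n‖ = rp b n := by
  rw [qpC_real, Complex.norm_real, Real.norm_of_nonneg (rp_pos hb0 hb1 n).le]

lemma qpC_real_ne {b : ℝ} (hb0 : 0 ≤ b) (hb1 : b < 1) (n : ℕ) :
    qpC (b : ℂ) (b : ℂ) n ≠ 0 := by
  intro h
  have h1 := norm_qpC_real hb0 hb1 n
  rw [h] at h1
  simp at h1
  have h2 := rp_pos hb0 hb1 n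
  linarith [h1]

/-- master ratio-test summability lemma -/
lemma summable_master {E : Type*} [NormedAddCommGroup E] [CompleteSpace E]
    {f : ℕ → E} {u : ℕ → ℝ} {L : ℝ} (hL : L < 1)
    (hu : Tendsto u atTop (𝓝 L)) (h : ∀ᶠ n in atTop, ‖f (n + 1)‖ ≤ u n * ‖f n‖) :
    Summable f := by
  set r : ℝ := (max L 0 + 1) / 2 with hr
  have hr1 : r < 1 := by
    simp only [hr]
    have : max L 0 < 1 := by simp [hL]
    linarith
  apply summable_of_ratio_norm_eventually_le hr1
  have hLr : L < r := by
    have : L ≤ max L 0 := le_max_left _ _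
    simp only [hr]; linarith
  filter_upwards [h, hu.eventually_lt_const hLr] with n h1 h2
  calc ‖f (n + 1)‖ ≤ u n * ‖f n‖ := h1
    _ ≤ r * ‖f n‖ := mul_le_mul_of_nonneg_right h2.le (norm_nonneg _)

end AqAux
section B
namespace AqAux

variable {b : ℝ}

lemma ofReal_one_sub_pow (b : ℝ) (m : ℕ) : (1 : ℂ) - (b : ℂ) ^ m = ((1 - b ^ m : ℝ) : ℂ) := by
  push_cast; ring

lemma norm_one_sub_pow (hb0 : 0 ≤ b) (hb1 : b < 1) (m : ℕ) :
    ‖(1 : ℂ) - (b : ℂ) ^ m‖ = 1 - b ^ m := by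
  rw [ofReal_one_sub_pow, Complex.norm_real, Real.norm_of_nonneg]
  have := pow_le_one₀ hb0 hb1.le (n := m)
  linarith

lemma one_sub_pow_ne (hb0 : 0 ≤ b) (hb1 : b < 1) {m : ℕ} (hm : 0 < m) :
    (1 : ℂ) - (b : ℂ) ^ m ≠ 0 := by
  intro h
  have h1 := norm_one_sub_pow hb0 hb1 m
  rw [h] at h1
  simp at h1
  have : b ^ m < 1 := pow_lt_one₀ hb0 hb1 hm.ne'
  linarith

lemma norm_div_qpC_le (hb0 : 0 ≤ b) (hb1 : b < 1) (x : ℂ) (j : ℕ) :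
    ‖x / qpC (b : ℂ) (b : ℂ) j‖ ≤ ‖x‖ / (1 - b) ^ j := by
  rw [norm_div, norm_qpC_real hb0 hb1]
  exact div_le_div_of_nonneg_left (norm_nonneg _)
    (pow_pos (by linarith) j) (one_sub_pow_le_rp hb0 hb1 j)

lemma tendsto_cb_zero (hb0 : 0 ≤ b) (hb1 : b < 1) (c : ℝ) :
    Tendsto (fun n : ℕ => c * b ^ n) atTop (𝓝 0) := by
  have := (tendsto_pow_atTop_nhds_zero_of_lt_one hb0 hb1).const_mul c
  simpa using this

lemma mult (hb0 : 0 < b) (hb1 : b < 1) {c : ℂ}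
    (hnz : ∀ k : ℕ, 1 - c * (b : ℂ) ^ k ≠ 0) :
    Multipliable (fun k : ℕ => 1 - c * (b : ℂ) ^ k) := by
  apply Complex.multipliable_of_summable_log
  apply Summable.of_norm_bounded_eventually_nat (g := fun n => 3 / 2 * (‖c‖ * b ^ n))
  · exact (((summable_geometric_of_lt_one hb0.le hb1).mul_left ‖c‖).mul_left (3 / 2))
  · have h2 : ∀ᶠ n : ℕ in atTop, ‖c‖ * b ^ n ≤ 1 / 2 := by
      filter_upwards [(tendsto_cb_zero hb0.le hb1 ‖c‖).eventually_lt_const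
        (by norm_num : (0:ℝ) < 1/2)] with n hn
      exact hn.le
    filter_upwards [h2] with n hn
    have he : (1 : ℂ) - c * (b : ℂ) ^ n = 1 + -(c * (b : ℂ) ^ n) := by ring
    rw [he]
    have hnorm : ‖-(c * (b : ℂ) ^ n)‖ = ‖c‖ * b ^ n := by
      rw [norm_neg, norm_mul, norm_pow, Complex.norm_real, Real.norm_of_nonneg hb0.le]
    calc ‖Complex.log (1 + -(c * (b : ℂ) ^ n))‖ ≤ 3 / 2 * ‖-(c * (b : ℂ) ^ n)‖ := by
          apply Complex.norm_log_one_add_half_le_self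
          rw [hnorm]; exact hn
      _ = 3 / 2 * (‖c‖ * b ^ n) := by rw [hnorm]

lemma tendsto_qpC (hb0 : 0 < b) (hb1 : b < 1) {c : ℂ}
    (hnz : ∀ k : ℕ, 1 - c * (b : ℂ) ^ k ≠ 0) :
    Tendsto (fun n => qpC (b : ℂ) c n) atTop (𝓝 (qpiC (b : ℂ) c)) :=
  (mult hb0 hb1 hnz).hasProd.tendsto_prod_nat

/-- Euler sum term -/
noncomputable def et (b : ℝ) (c : ℂ) (j : ℕ) : ℂ :=
  (-1) ^ j * (b : ℂ) ^ tri j * c ^ j / qpC (b : ℂ) (b : ℂ) j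

lemma et_zero (c : ℂ) : et b c 0 = 1 := by simp [et, qpC_zero, tri]

lemma et_succ (hb0 : 0 < b) (hb1 : b < 1) (c : ℂ) (j : ℕ) :
    et b c (j + 1) * (1 - (b : ℂ) ^ (j + 1)) = -((b : ℂ) ^ j * c) * et b c j := by
  have hq := qpC_real_ne hb0.le hb1 (b := b) j
  have hx := one_sub_pow_ne hb0.le hb1 (m := j + 1) (Nat.succ_pos j)
  unfold et
  rw [qpC_succ, tri_succ]
  have : (1 : ℂ) - (b : ℂ) * (b : ℂ) ^ j = 1 - (b : ℂ) ^ (j + 1) := by ring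
  rw [this]
  field_simp
  ring

lemma norm_et_succ_le (hb0 : 0 < b) (hb1 : b < 1) (c : ℂ) (j : ℕ) :
    ‖et b c (j + 1)‖ ≤ b ^ j * (‖c‖ / (1 - b)) * ‖et b c j‖ := by
  have h := congrArg norm (et_succ hb0 hb1 c j)
  rw [norm_mul, norm_mul, norm_neg, norm_mul, norm_pow, Complex.norm_real,
    Real.norm_of_nonneg hb0.le, norm_one_sub_pow hb0.le hb1] at h
  have hb' : 0 < 1 - b ^ (j + 1) := by
    have : b ^ (j+1) < 1 := pow_lt_one₀ hb0.le hb1 (Nat.succ_ne_zero j)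
    linarith
  have hb'' : 1 - b ≤ 1 - b ^ (j + 1) := by
    have : b ^ (j + 1) ≤ b := pow_le_of_le_one hb0.le hb1.le (Nat.succ_ne_zero j)
    linarith
  have h1b : 0 < 1 - b := by linarith
  have key : ‖et b c (j + 1)‖ * (1 - b) ≤ b ^ j * ‖c‖ * ‖et b c j‖ := by
    calc ‖et b c (j + 1)‖ * (1 - b) ≤ ‖et b c (j + 1)‖ * (1 - b ^ (j + 1)) := by
          exact mul_le_mul_of_nonneg_left hb'' (norm_nonneg _)
      _ = b ^ j * ‖c‖ * ‖et b c j‖ := h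
  have hre : b ^ j * (‖c‖ / (1 - b)) * ‖et b c j‖ = b ^ j * ‖c‖ * ‖et b c j‖ / (1 - b) := by
    ring
  rw [hre, le_div_iff₀ h1b]
  exact key

lemma summable_et (hb0 : 0 < b) (hb1 : b < 1) (c : ℂ) : Summable (et b c) := by
  apply summable_master (u := fun j => b ^ j * (‖c‖ / (1 - b))) (L := 0) (by norm_num)
  · simpa [mul_comm] using tendsto_cb_zero hb0.le hb1 (‖c‖ / (1 - b))
  · exact Filter.Eventually.of_forall fun j => norm_et_succ_le hb0 hb1 c j

end AqAux
end B
section C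
namespace AqAux

variable {b : ℝ}

lemma fe_et (hb0 : 0 < b) (hb1 : b < 1) (c : ℂ) :
    (∑' j, et b c j) = (1 - c) * ∑' j, et b (c * (b : ℂ)) j := by
  have hs1 : Summable (et b c) := summable_et hb0 hb1 c
  have hs2 : Summable (et b (c * (b : ℂ))) := summable_et hb0 hb1 _
  have hd : ∀ j : ℕ, et b c (j + 1) - et b (c * (b : ℂ)) (j + 1) = -c * et b (c * (b : ℂ)) j := by
    intro j
    have hq := qpC_real_ne hb0.le hb1 (b := b) j
    have hx := one_sub_pow_ne hb0.le hb1 (m := j + 1) (Nat.succ_pos j)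
    unfold et
    rw [qpC_succ, tri_succ]
    have h1 : (1 : ℂ) - (b : ℂ) * (b : ℂ) ^ j = 1 - (b : ℂ) ^ (j + 1) := by ring
    rw [h1]
    field_simp
    ring
  have h0 : et b c 0 - et b (c * (b : ℂ)) 0 = 0 := by rw [et_zero, et_zero, sub_self]
  have key : (∑' j, et b c j) - (∑' j, et b (c * (b : ℂ)) j) = -c * ∑' j, et b (c * (b : ℂ)) j := by
    rw [← Summable.tsum_sub hs1 hs2, Summable.tsum_eq_zero_add (hs1.sub hs2), h0, zero_add]
    calc (∑' j, (et b c (j + 1) - et b (c * (b : ℂ)) (j + 1)))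
        = ∑' j, -c * et b (c * (b : ℂ)) j := by exact tsum_congr hd
      _ = -c * ∑' j, et b (c * (b : ℂ)) j := tsum_mul_left
  linear_combination key

lemma iterate_et (hb0 : 0 < b) (hb1 : b < 1) (c : ℂ) (m : ℕ) :
    (∑' j, et b c j) = qpC (b : ℂ) c m * ∑' j, et b (c * (b : ℂ) ^ m) j := by
  induction m with
  | zero => simp [qpC_zero]
  | succ m ih =>
    rw [ih, fe_et hb0 hb1 (c * (b : ℂ) ^ m), qpC_succ]
    have h1 : c * (b : ℂ) ^ m * (b : ℂ) = c * (b : ℂ) ^ (m + 1) := by ring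
    rw [h1]
    ring

lemma tendsto_F (hb0 : 0 < b) (hb1 : b < 1) (c : ℂ) :
    Tendsto (fun m => ∑' j, et b (c * (b : ℂ) ^ m) j) atTop (𝓝 1) := by
  set K : ℝ := max ‖c‖ 1 with hK
  have hK1 : 1 ≤ K := le_max_right _ _
  have hKc : ‖c‖ ≤ K := le_max_left _ _
  have h1b : (0:ℝ) < 1 - b := by linarith
  set bound : ℕ → ℝ := fun j => b ^ tri j * (K / (1 - b)) ^ j with hbound
  have hbnonneg : ∀ j, 0 ≤ bound j := fun j =>
    mul_nonneg (pow_nonneg hb0.le _) (pow_nonneg (div_nonneg (by linarith) h1b.le) _)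
  have hbsucc : ∀ j, bound (j + 1) = b ^ j * (K / (1 - b)) * bound j := by
    intro j
    simp only [hbound, tri_succ, pow_add, pow_succ]
    ring
  have h_sum : Summable bound := by
    apply summable_master (u := fun j => b ^ j * (K / (1 - b))) (L := 0) (by norm_num)
    · simpa [mul_comm] using tendsto_cb_zero hb0.le hb1 (K / (1 - b))
    · apply Filter.Eventually.of_forall
      intro j
      rw [Real.norm_of_nonneg (hbnonneg _), Real.norm_of_nonneg (hbnonneg _), hbsucc]
  have hg : (∑' j : ℕ, if j = 0 then (1:ℂ) else 0) = 1 := tsum_ite_eq 0 1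
  rw [← hg]
  apply tendsto_tsum_of_dominated_convergence h_sum
  · intro j
    rcases j with _ | i
    · simp only [et_zero, if_pos rfl]
      exact tendsto_const_nhds
    · have heq : (fun m => et b (c * (b : ℂ) ^ m) (i + 1)) =
          fun m => ((-1) ^ (i+1) * (b : ℂ) ^ tri (i+1) * c ^ (i+1) / qpC (b : ℂ) (b : ℂ) (i+1)) *
            (((b : ℂ) ^ (i+1)) ^ m) := by
        funext m
        unfold et
        rw [mul_pow, ← pow_mul, ← pow_mul, mul_comm m (i + 1)]
        ring
      rw [heq]
      have hlt : ‖(b : ℂ) ^ (i + 1)‖ < 1 := by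
        rw [norm_pow, Complex.norm_real, Real.norm_of_nonneg hb0.le]
        exact pow_lt_one₀ hb0.le hb1 (Nat.succ_ne_zero i)
      have := (tendsto_pow_atTop_nhds_zero_of_norm_lt_one hlt).const_mul
        ((-1) ^ (i+1) * (b : ℂ) ^ tri (i+1) * c ^ (i+1) / qpC (b : ℂ) (b : ℂ) (i+1))
      simpa using this
  · apply Filter.Eventually.of_forall
    intro m j
    have hnum : ‖(-1 : ℂ) ^ j * (b : ℂ) ^ tri j * (c * (b : ℂ) ^ m) ^ j‖ ≤ b ^ tri j * K ^ j := by
      rw [norm_mul, norm_mul, norm_pow, norm_pow, norm_pow, norm_neg, norm_one, one_pow, one_mul,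
        Complex.norm_real, Real.norm_of_nonneg hb0.le, norm_mul, norm_pow, Complex.norm_real,
        Real.norm_of_nonneg hb0.le]
      apply mul_le_mul_of_nonneg_left _ (pow_nonneg hb0.le _)
      apply pow_le_pow_left₀ (by positivity)
      calc ‖c‖ * b ^ m ≤ ‖c‖ * 1 := by
            apply mul_le_mul_of_nonneg_left (pow_le_one₀ hb0.le hb1.le) (norm_nonneg _)
        _ = ‖c‖ := mul_one _
        _ ≤ K := hKc
    calc ‖et b (c * (b : ℂ) ^ m) j‖
        ≤ ‖(-1 : ℂ) ^ j * (b : ℂ) ^ tri j * (c * (b : ℂ) ^ m) ^ j‖ / (1 - b) ^ j :=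
          norm_div_qpC_le hb0.le hb1 _ j
      _ ≤ (b ^ tri j * K ^ j) / (1 - b) ^ j := by
          exact div_le_div_of_nonneg_right hnum (pow_pos h1b j).le
      _ = bound j := by simp only [hbound, div_pow]; ring

lemma euler1 (hb0 : 0 < b) (hb1 : b < 1) {c : ℂ}
    (hnz : ∀ k : ℕ, 1 - c * (b : ℂ) ^ k ≠ 0) :
    qpiC (b : ℂ) c = ∑' j, et b c j := by
  have h1 : Tendsto (fun m => qpC (b : ℂ) c m * ∑' j, et b (c * (b : ℂ) ^ m) j) atTop
      (𝓝 (qpiC (b : ℂ) c * 1)) := (tendsto_qpC hb0 hb1 hnz).mul (tendsto_F hb0 hb1 c)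
  have h2 : ∀ m : ℕ, qpC (b : ℂ) c m * ∑' j, et b (c * (b : ℂ) ^ m) j = ∑' j, et b c j :=
    fun m => (iterate_et hb0 hb1 c m).symm
  have h3 := (tendsto_congr h2).mp h1
  have h4 := tendsto_nhds_unique h3 tendsto_const_nhds
  rw [mul_one] at h4
  exact h4

end AqAux
end C
section D
namespace AqAux

variable {b : ℝ}

/-- Euler's second sum term -/
noncomputable def gt (b : ℝ) (c : ℂ) (j : ℕ) : ℂ := c ^ j / qpC (b : ℂ) (b : ℂ) j

lemma gt_zero (c : ℂ) : gt b c 0 = 1 := by simp [gt, qpC_zero]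

lemma gt_succ (hb0 : 0 < b) (hb1 : b < 1) (c : ℂ) (j : ℕ) :
    gt b c (j + 1) * (1 - (b : ℂ) ^ (j + 1)) = c * gt b c j := by
  have hq := qpC_real_ne hb0.le hb1 (b := b) j
  have hx := one_sub_pow_ne hb0.le hb1 (m := j + 1) (Nat.succ_pos j)
  unfold gt
  rw [qpC_succ]
  have h1 : (1 : ℂ) - (b : ℂ) * (b : ℂ) ^ j = 1 - (b : ℂ) ^ (j + 1) := by ring
  rw [h1]
  field_simp
  ring

lemma summable_gt (hb0 : 0 < b) (hb1 : b < 1) {c : ℂ} (hc : ‖c‖ < 1) :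
    Summable (gt b c) := by
  apply summable_master (u := fun j => ‖c‖ / (1 - b ^ (j + 1))) (L := ‖c‖) hc
  · have h1 : Tendsto (fun j : ℕ => 1 - b ^ (j + 1)) atTop (𝓝 1) := by
      have h2 : Tendsto (fun j : ℕ => b * b ^ j) atTop (𝓝 0) := tendsto_cb_zero hb0.le hb1 b
      have hc1 : Tendsto (fun _ : ℕ => (1:ℝ)) atTop (𝓝 1) := tendsto_const_nhds
      have h3 := hc1.sub h2
      simp only [sub_zero] at h3
      convert h3 using 2 with j
      rw [pow_succ]
      ring
    have hc2 : Tendsto (fun _ : ℕ => ‖c‖) atTop (𝓝 ‖c‖) := tendsto_const_nhds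
    have := hc2.div h1 one_ne_zero
    rw [div_one] at this
    exact this
  · apply Filter.Eventually.of_forall
    intro j
    have h := congrArg norm (gt_succ hb0 hb1 c j)
    rw [norm_mul, norm_mul, norm_one_sub_pow hb0.le hb1] at h
    have hb' : 0 < 1 - b ^ (j + 1) := by
      have : b ^ (j+1) < 1 := pow_lt_one₀ hb0.le hb1 (Nat.succ_ne_zero j)
      linarith
    rw [div_mul_eq_mul_div, le_div_iff₀ hb']
    rw [h]

lemma fe_gt (hb0 : 0 < b) (hb1 : b < 1) {c : ℂ} (hc : ‖c‖ < 1) :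
    (∑' j, gt b (c * (b : ℂ)) j) = (1 - c) * ∑' j, gt b c j := by
  have hcb : ‖c * (b : ℂ)‖ < 1 := by
    rw [norm_mul, Complex.norm_real, Real.norm_of_nonneg hb0.le]
    nlinarith [norm_nonneg c]
  have hs1 : Summable (gt b c) := summable_gt hb0 hb1 hc
  have hs2 : Summable (gt b (c * (b : ℂ))) := summable_gt hb0 hb1 hcb
  have hd : ∀ j : ℕ, gt b c (j + 1) - gt b (c * (b : ℂ)) (j + 1) = c * gt b c j := by
    intro j
    have hq := qpC_real_ne hb0.le hb1 (b := b) j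
    have hx := one_sub_pow_ne hb0.le hb1 (m := j + 1) (Nat.succ_pos j)
    unfold gt
    rw [qpC_succ]
    have h1 : (1 : ℂ) - (b : ℂ) * (b : ℂ) ^ j = 1 - (b : ℂ) ^ (j + 1) := by ring
    rw [h1]
    field_simp
    ring
  have h0 : gt b c 0 - gt b (c * (b : ℂ)) 0 = 0 := by rw [gt_zero, gt_zero, sub_self]
  have key : (∑' j, gt b c j) - (∑' j, gt b (c * (b : ℂ)) j) = c * ∑' j, gt b c j := by
    rw [← Summable.tsum_sub hs1 hs2, Summable.tsum_eq_zero_add (hs1.sub hs2), h0, zero_add]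
    calc (∑' j, (gt b c (j + 1) - gt b (c * (b : ℂ)) (j + 1)))
        = ∑' j, c * gt b c j := tsum_congr hd
      _ = c * ∑' j, gt b c j := tsum_mul_left
  linear_combination -key

lemma norm_cbm (hb0 : 0 < b) (hb1 : b < 1) (c : ℂ) (m : ℕ) :
    ‖c * (b : ℂ) ^ m‖ = ‖c‖ * b ^ m := by
  rw [norm_mul, norm_pow, Complex.norm_real, Real.norm_of_nonneg hb0.le]

lemma iterate_gt (hb0 : 0 < b) (hb1 : b < 1) {c : ℂ} (hc : ‖c‖ < 1) (m : ℕ) :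
    (∑' j, gt b (c * (b : ℂ) ^ m) j) = qpC (b : ℂ) c m * ∑' j, gt b c j := by
  induction m with
  | zero => simp [qpC_zero]
  | succ m ih =>
    have hcm : ‖c * (b : ℂ) ^ m‖ < 1 := by
      rw [norm_cbm hb0 hb1]
      calc ‖c‖ * b ^ m ≤ ‖c‖ * 1 :=
            mul_le_mul_of_nonneg_left (pow_le_one₀ hb0.le hb1.le) (norm_nonneg _)
        _ = ‖c‖ := mul_one _
        _ < 1 := hc
    have h1 : c * (b : ℂ) ^ (m + 1) = (c * (b : ℂ) ^ m) * (b : ℂ) := by ring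
    rw [h1, fe_gt hb0 hb1 hcm, ih, qpC_succ]
    ring

lemma tendsto_G (hb0 : 0 < b) (hb1 : b < 1) (c : ℂ) :
    Tendsto (fun m => ∑' j, gt b (c * (b : ℂ) ^ m) j) atTop (𝓝 1) := by
  have h1b : (0:ℝ) < 1 - b := by linarith
  have h_sum : Summable (fun j : ℕ => (1/2 : ℝ) ^ j) :=
    summable_geometric_of_lt_one (by norm_num) (by norm_num)
  have hg : (∑' j : ℕ, if j = 0 then (1:ℂ) else 0) = 1 := tsum_ite_eq 0 1
  rw [← hg]
  apply tendsto_tsum_of_dominated_convergence h_sum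
  · intro j
    rcases j with _ | i
    · simp only [gt_zero, if_pos rfl]
      exact tendsto_const_nhds
    · have heq : (fun m => gt b (c * (b : ℂ) ^ m) (i + 1)) =
          fun m => (c ^ (i+1) / qpC (b : ℂ) (b : ℂ) (i+1)) * (((b : ℂ) ^ (i+1)) ^ m) := by
        funext m
        unfold gt
        rw [mul_pow, ← pow_mul, ← pow_mul, mul_comm m (i + 1)]
        ring
      rw [heq]
      have hlt : ‖(b : ℂ) ^ (i + 1)‖ < 1 := by
        rw [norm_pow, Complex.norm_real, Real.norm_of_nonneg hb0.le]
        exact pow_lt_one₀ hb0.le hb1 (Nat.succ_ne_zero i)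
      have := (tendsto_pow_atTop_nhds_zero_of_norm_lt_one hlt).const_mul
        (c ^ (i+1) / qpC (b : ℂ) (b : ℂ) (i+1))
      simpa using this
  · have hev : ∀ᶠ m : ℕ in atTop, ‖c‖ * b ^ m ≤ (1 - b) / 2 := by
      filter_upwards [(tendsto_cb_zero hb0.le hb1 ‖c‖).eventually_lt_const
        (by positivity : (0:ℝ) < (1 - b)/2)] with m hm
      exact hm.le
    filter_upwards [hev] with m hm
    intro j
    calc ‖gt b (c * (b : ℂ) ^ m) j‖
        ≤ ‖(c * (b : ℂ) ^ m) ^ j‖ / (1 - b) ^ j := norm_div_qpC_le hb0.le hb1 _ j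
      _ ≤ ((1 - b)/2) ^ j / (1 - b) ^ j := by
          apply div_le_div_of_nonneg_right _ (pow_pos h1b j).le
          rw [norm_pow, norm_cbm hb0 hb1]
          exact pow_le_pow_left₀ (by positivity) hm j
      _ = (1/2 : ℝ) ^ j := by
          have he : ((1 - b)/2) ^ j = (1/2 : ℝ) ^ j * (1 - b) ^ j := by
            rw [← mul_pow]; ring_nf
          rw [he, mul_div_assoc, div_self (pow_ne_zero _ h1b.ne'), mul_one]

lemma euler2 (hb0 : 0 < b) (hb1 : b < 1) {c : ℂ} (hc : ‖c‖ < 1)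
    (hnz : ∀ k : ℕ, 1 - c * (b : ℂ) ^ k ≠ 0) :
    qpiC (b : ℂ) c * (∑' j, gt b c j) = 1 := by
  have h1 : Tendsto (fun m => qpC (b : ℂ) c m * ∑' j, gt b c j) atTop
      (𝓝 (qpiC (b : ℂ) c * ∑' j, gt b c j)) := (tendsto_qpC hb0 hb1 hnz).mul_const _
  have h2 : ∀ m : ℕ, qpC (b : ℂ) c m * ∑' j, gt b c j = ∑' j, gt b (c * (b : ℂ) ^ m) j :=
    fun m => (iterate_gt hb0 hb1 hc m).symm
  have h3 := (tendsto_congr h2).mp h1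
  exact tendsto_nhds_unique h3 (tendsto_G hb0 hb1 c)

end AqAux
end D
section E
namespace AqAux

variable {b : ℝ}

lemma qpC_even_odd (B c : ℂ) (m : ℕ) :
    qpC B c (2 * m) = qpC (B ^ 2) c m * qpC (B ^ 2) (c * B) m := by
  induction m with
  | zero => simp [qpC_zero]
  | succ m ih =>
    have h2 : 2 * (m + 1) = (2 * m + 1) + 1 := by omega
    rw [h2, qpC_succ, qpC_succ, qpC_succ, qpC_succ, ih]
    have e1 : (B ^ 2) ^ m = B ^ (2 * m) := by rw [← pow_mul]
    rw [e1]
    have e2 : B ^ (2 * m + 1) = B ^ (2 * m) * B := by rw [pow_succ]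
    rw [e2]
    ring

lemma tendsto_two_mul : Tendsto (fun m : ℕ => 2 * m) atTop atTop :=
  tendsto_atTop_mono (fun n => by simp only [id]; omega) tendsto_id

lemma even_odd_split (hb0 : 0 < b) (hb1 : b < 1) {c : ℂ}
    (hnz : ∀ k : ℕ, 1 - c * (b : ℂ) ^ k ≠ 0) :
    qpiC (b : ℂ) c = qpiC ((b : ℂ) ^ 2) c * qpiC ((b : ℂ) ^ 2) (c * (b : ℂ)) := by
  have hco : ((b ^ 2 : ℝ) : ℂ) = (b : ℂ) ^ 2 := by push_cast; rfl
  have hb20 : 0 < b ^ 2 := by positivity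
  have hb21 : b ^ 2 < 1 := by nlinarith
  have hnze : ∀ k : ℕ, 1 - c * ((b ^ 2 : ℝ) : ℂ) ^ k ≠ 0 := by
    intro k
    have := hnz (2 * k)
    rw [hco, ← pow_mul]
    exact this
  have hnzo : ∀ k : ℕ, 1 - (c * (b : ℂ)) * ((b ^ 2 : ℝ) : ℂ) ^ k ≠ 0 := by
    intro k
    have h := hnz (2 * k + 1)
    rw [hco, ← pow_mul]
    have e : c * (b : ℂ) * (b : ℂ) ^ (2 * k) = c * (b : ℂ) ^ (2 * k + 1) := by
      rw [pow_succ]; ring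
    rw [e]
    exact h
  have t1 : Tendsto (fun m => qpC (b : ℂ) c (2 * m)) atTop (𝓝 (qpiC (b : ℂ) c)) :=
    (tendsto_qpC hb0 hb1 hnz).comp tendsto_two_mul
  have t2 : Tendsto (fun m => qpC ((b : ℂ) ^ 2) c m * qpC ((b : ℂ) ^ 2) (c * (b : ℂ)) m) atTop
      (𝓝 (qpiC ((b : ℂ) ^ 2) c * qpiC ((b : ℂ) ^ 2) (c * (b : ℂ)))) := by
    have ha := tendsto_qpC hb20 hb21 hnze
    have hb := tendsto_qpC hb20 hb21 hnzo
    rw [hco] at ha hb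
    exact ha.mul hb
  have t1' := (tendsto_congr (fun m => qpC_even_odd (b : ℂ) c m)).mp t1
  exact tendsto_nhds_unique t1' t2

end AqAux
end E
section F
namespace AqAux

lemma coeff_ext {d : ℕ → ℂ} {M A : ℝ} (hM : 0 ≤ M) (hA : 1 ≤ A)
    (hb : ∀ k, ‖d k‖ ≤ M * A ^ k) {δ : ℝ} (hδ : 0 < δ)
    (h : ∀ t : ℝ, 0 < t → t < δ → (∑' k, d k * (t : ℂ) ^ k) = 0) : ∀ k, d k = 0 := by
  intro k
  induction k using Nat.strong_induction_on with
  | _ k ih =>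
  have hA0 : 0 < A := lt_of_lt_of_le one_pos hA
  set δ' : ℝ := min δ (1 / (2 * A)) with hδ'
  have hδ'0 : 0 < δ' := lt_min hδ (by positivity)
  have key : ∀ t : ℝ, 0 < t → t < δ' → ‖d k‖ ≤ 2 * M * A ^ (k + 1) * t := by
    intro t ht0 htδ
    have htA : A * t ≤ 1 / 2 := by
      have h1 : t < 1 / (2 * A) := lt_of_lt_of_le htδ (min_le_right _ _)
      rw [lt_div_iff₀ (by positivity)] at h1
      nlinarith
    have hAt1 : A * t < 1 := by linarith
    have hAt0 : 0 ≤ A * t := by positivity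
    have hgeo : Summable (fun i : ℕ => (A * t) ^ i) := summable_geometric_of_lt_one hAt0 hAt1
    have hnorm : ∀ j i : ℕ, ‖d (i + j) * (t : ℂ) ^ i‖ ≤ (M * A ^ j) * (A * t) ^ i := by
      intro j i
      rw [norm_mul, norm_pow, Complex.norm_real, Real.norm_of_nonneg ht0.le]
      calc ‖d (i + j)‖ * t ^ i ≤ M * A ^ (i + j) * t ^ i :=
            mul_le_mul_of_nonneg_right (hb _) (pow_nonneg ht0.le _)
        _ = M * A ^ j * (A * t) ^ i := by rw [pow_add, mul_pow]; ring
    have hsum : Summable (fun j => d j * (t : ℂ) ^ j) := by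
      apply Summable.of_norm_bounded (g := fun j => M * (A * t) ^ j) (hgeo.mul_left M)
      intro j
      have := hnorm j 0
      simpa using hnorm 0 j
    have hsum2 : Summable (fun i => d (i + k) * (t : ℂ) ^ i) := by
      apply Summable.of_norm_bounded (g := fun i => (M * A ^ k) * (A * t) ^ i)
        (hgeo.mul_left _) (hnorm k)
    have h0 := h t ht0 (lt_of_lt_of_le htδ (min_le_left _ _))
    have hzero : (∑ i ∈ Finset.range k, d i * (t : ℂ) ^ i) = 0 :=
      Finset.sum_eq_zero fun i hi => by rw [ih i (Finset.mem_range.mp hi), zero_mul]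
    have h1 : (∑' i, d (i + k) * (t : ℂ) ^ (i + k)) = 0 := by
      have hsp := Summable.sum_add_tsum_nat_add (f := fun j => d j * (t : ℂ) ^ j) k hsum
      rw [hzero, zero_add] at hsp
      rw [hsp, h0]
    have h2 : (∑' i, d (i + k) * (t : ℂ) ^ i) = 0 := by
      have he : (∑' i, d (i + k) * (t : ℂ) ^ (i + k)) =
          (t : ℂ) ^ k * ∑' i, d (i + k) * (t : ℂ) ^ i := by
        rw [← tsum_mul_left]
        apply tsum_congr
        intro i
        rw [pow_add]
        ring
      rw [he] at h1
      have htk : ((t : ℂ)) ^ k ≠ 0 := pow_ne_zero _ (by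
        simpa using Complex.ofReal_ne_zero.mpr ht0.ne')
      exact (mul_eq_zero.mp h1).resolve_left htk
    have h3 := Summable.sum_add_tsum_nat_add (f := fun i => d (i + k) * (t : ℂ) ^ i) 1 hsum2
    rw [h2] at h3
    have h4 : d k = -∑' i, d (i + 1 + k) * (t : ℂ) ^ (i + 1) := by
      have : (∑ i ∈ Finset.range 1, d (i + k) * (t : ℂ) ^ i) = d k := by simp
      rw [this] at h3
      linear_combination h3
    have hns : Summable (fun i => ‖d (i + 1 + k) * (t : ℂ) ^ (i + 1)‖) := by
      apply Summable.of_nonneg_of_le (fun i => norm_nonneg _)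
        (fun i => ?_) ((hgeo.mul_left (M * A ^ (k + 1) * t)))
      rw [norm_mul, norm_pow, Complex.norm_real, Real.norm_of_nonneg ht0.le]
      calc ‖d (i + 1 + k)‖ * t ^ (i + 1) ≤ M * A ^ (i + 1 + k) * t ^ (i + 1) :=
            mul_le_mul_of_nonneg_right (hb _) (pow_nonneg ht0.le _)
        _ = M * A ^ (k + 1) * t * (A * t) ^ i := by rw [pow_add, pow_add, mul_pow]; ring
    calc ‖d k‖ = ‖∑' i, d (i + 1 + k) * (t : ℂ) ^ (i + 1)‖ := by rw [h4, norm_neg]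
      _ ≤ ∑' i, ‖d (i + 1 + k) * (t : ℂ) ^ (i + 1)‖ := norm_tsum_le_tsum_norm hns
      _ ≤ ∑' i, M * A ^ (k + 1) * t * (A * t) ^ i := by
          apply Summable.tsum_le_tsum _ hns (hgeo.mul_left _)
          intro i
          rw [norm_mul, norm_pow, Complex.norm_real, Real.norm_of_nonneg ht0.le]
          calc ‖d (i + 1 + k)‖ * t ^ (i + 1) ≤ M * A ^ (i + 1 + k) * t ^ (i + 1) :=
                mul_le_mul_of_nonneg_right (hb _) (pow_nonneg ht0.le _)
            _ = M * A ^ (k + 1) * t * (A * t) ^ i := by rw [pow_add, pow_add, mul_pow]; ring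
      _ = M * A ^ (k + 1) * t * ∑' i, (A * t) ^ i := tsum_mul_left
      _ = M * A ^ (k + 1) * t * (1 - A * t)⁻¹ := by rw [tsum_geometric_of_lt_one hAt0 hAt1]
      _ ≤ 2 * M * A ^ (k + 1) * t := by
          have hi : (1 - A * t)⁻¹ ≤ 2 := by
            rw [inv_le_comm₀ (by linarith) (by norm_num)]
            linarith
          calc M * A ^ (k + 1) * t * (1 - A * t)⁻¹ ≤ M * A ^ (k + 1) * t * 2 :=
                mul_le_mul_of_nonneg_left hi (by positivity)
            _ = 2 * M * A ^ (k + 1) * t := by ring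
  have htend : Filter.Tendsto (fun t : ℝ => 2 * M * A ^ (k + 1) * t) (nhdsWithin 0 (Set.Ioi 0))
      (𝓝 0) := by
    have hcont : Filter.Tendsto (fun t : ℝ => 2 * M * A ^ (k + 1) * t) (𝓝 0)
        (𝓝 (2 * M * A ^ (k + 1) * 0)) := (continuous_const.mul continuous_id).tendsto 0
    rw [mul_zero] at hcont
    exact hcont.mono_left nhdsWithin_le_nhds
  have hev : ∀ᶠ t in nhdsWithin (0:ℝ) (Set.Ioi 0), ‖d k‖ ≤ 2 * M * A ^ (k + 1) * t := by
    have hmem : Set.Ioo (0:ℝ) δ' ∈ nhdsWithin (0:ℝ) (Set.Ioi 0) :=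
      Ioo_mem_nhdsGT_of_mem ⟨le_refl 0, hδ'0⟩
    filter_upwards [hmem] with t ht
    exact key t ht.1 ht.2
  have := ge_of_tendsto htend hev
  have hn0 : ‖d k‖ ≤ 0 := this
  simpa using norm_le_zero_iff.mp hn0

end AqAux
end F
section G
namespace AqAux

variable {b : ℝ}

lemma summable_norm_et (hb0 : 0 < b) (hb1 : b < 1) (c : ℂ) :
    Summable (fun j => ‖et b c j‖) := by
  apply summable_master (u := fun j => b ^ j * (‖c‖ / (1 - b))) (L := 0) (by norm_num)
  · simpa [mul_comm] using tendsto_cb_zero hb0.le hb1 (‖c‖ / (1 - b))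
  · apply Filter.Eventually.of_forall
    intro j
    rw [Real.norm_of_nonneg (norm_nonneg _), Real.norm_of_nonneg (norm_nonneg _)]
    exact norm_et_succ_le hb0 hb1 c j

lemma summable_norm_gt (hb0 : 0 < b) (hb1 : b < 1) {c : ℂ} (hc : ‖c‖ < 1) :
    Summable (fun j => ‖gt b c j‖) := by
  apply summable_master (u := fun j => ‖c‖ / (1 - b ^ (j + 1))) (L := ‖c‖) hc
  · have h2 : Tendsto (fun j : ℕ => b * b ^ j) atTop (𝓝 0) := tendsto_cb_zero hb0.le hb1 b
    have hc1 : Tendsto (fun _ : ℕ => (1:ℝ)) atTop (𝓝 1) := tendsto_const_nhds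
    have h3 := hc1.sub h2
    simp only [sub_zero] at h3
    have h1 : Tendsto (fun j : ℕ => 1 - b ^ (j + 1)) atTop (𝓝 1) := by
      convert h3 using 2 with j
      rw [pow_succ]
      ring
    have hc2 : Tendsto (fun _ : ℕ => ‖c‖) atTop (𝓝 ‖c‖) := tendsto_const_nhds
    have := hc2.div h1 one_ne_zero
    rw [div_one] at this
    exact this
  · apply Filter.Eventually.of_forall
    intro j
    rw [Real.norm_of_nonneg (norm_nonneg _), Real.norm_of_nonneg (norm_nonneg _)]
    have h := congrArg norm (gt_succ hb0 hb1 c j)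
    rw [norm_mul, norm_mul, norm_one_sub_pow hb0.le hb1] at h
    have hb' : 0 < 1 - b ^ (j + 1) := by
      have : b ^ (j+1) < 1 := pow_lt_one₀ hb0.le hb1 (Nat.succ_ne_zero j)
      linarith
    rw [div_mul_eq_mul_div, le_div_iff₀ hb']
    rw [h]

variable {p : ℝ}

/-- the three coefficient sequences -/
noncomputable def a2 (p : ℝ) (n : ℕ) : ℂ := (-1) ^ n * (p : ℂ) ^ tri n / qpC (p : ℂ) (p : ℂ) n

noncomputable def b2 (p : ℝ) (m : ℕ) : ℂ := (p : ℂ) ^ m / qpC ((p : ℂ) ^ 2) ((p : ℂ) ^ 2) m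

noncomputable def g2 (p : ℝ) (k : ℕ) : ℂ :=
  (-1) ^ k * (p : ℂ) ^ (2 * tri k) / qpC ((p : ℂ) ^ 2) ((p : ℂ) ^ 2) k

lemma hco (p : ℝ) : ((p ^ 2 : ℝ) : ℂ) = (p : ℂ) ^ 2 := by push_cast; rfl

lemma norm_a2_le (hp0 : 0 < p) (hp1 : p < 1) (n : ℕ) :
    ‖a2 p n‖ ≤ (1 / (1 - p)) ^ n := by
  unfold a2
  calc ‖((-1) ^ n * (p : ℂ) ^ tri n) / qpC (p : ℂ) (p : ℂ) n‖
      ≤ ‖(-1 : ℂ) ^ n * (p : ℂ) ^ tri n‖ / (1 - p) ^ n := norm_div_qpC_le hp0.le hp1 _ n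
    _ ≤ 1 / (1 - p) ^ n := by
        apply div_le_div_of_nonneg_right _ (pow_nonneg (by linarith) n)
        rw [norm_mul, norm_pow, norm_pow, norm_neg, norm_one, one_pow, one_mul,
          Complex.norm_real, Real.norm_of_nonneg hp0.le]
        exact pow_le_one₀ hp0.le hp1.le
    _ = (1 / (1 - p)) ^ n := by rw [div_pow, one_pow]

lemma norm_b2_le (hp0 : 0 < p) (hp1 : p < 1) (m : ℕ) :
    ‖b2 p m‖ ≤ (1 / (1 - p)) ^ m := by
  have hp20 : (0:ℝ) < p ^ 2 := by positivity
  have hp21 : p ^ 2 < 1 := by nlinarith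
  unfold b2
  rw [← hco]
  calc ‖((p : ℂ)) ^ m / qpC ((p ^ 2 : ℝ) : ℂ) ((p ^ 2 : ℝ) : ℂ) m‖
      ≤ ‖((p : ℂ)) ^ m‖ / (1 - p ^ 2) ^ m := norm_div_qpC_le hp20.le hp21 _ m
    _ ≤ 1 / (1 - p) ^ m := by
        apply div_le_div₀ _ _ (pow_pos (by linarith) m) _
        · norm_num
        · rw [norm_pow, Complex.norm_real, Real.norm_of_nonneg hp0.le]
          exact pow_le_one₀ hp0.le hp1.le
        · apply pow_le_pow_left₀ (by nlinarith)
          nlinarith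
    _ = (1 / (1 - p)) ^ m := by rw [div_pow, one_pow]

lemma norm_g2_le (hp0 : 0 < p) (hp1 : p < 1) (k : ℕ) :
    ‖g2 p k‖ ≤ (1 / (1 - p)) ^ k := by
  have hp20 : (0:ℝ) < p ^ 2 := by positivity
  have hp21 : p ^ 2 < 1 := by nlinarith
  unfold g2
  rw [← hco]
  calc ‖((-1) ^ k * (p : ℂ) ^ (2 * tri k)) / qpC ((p ^ 2 : ℝ) : ℂ) ((p ^ 2 : ℝ) : ℂ) k‖
      ≤ ‖(-1 : ℂ) ^ k * (p : ℂ) ^ (2 * tri k)‖ / (1 - p ^ 2) ^ k := norm_div_qpC_le hp20.le hp21 _ k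
    _ ≤ 1 / (1 - p) ^ k := by
        apply div_le_div₀ _ _ (pow_pos (by linarith) k) _
        · norm_num
        · rw [norm_mul, norm_pow, norm_pow, norm_neg, norm_one, one_pow, one_mul,
            Complex.norm_real, Real.norm_of_nonneg hp0.le]
          exact pow_le_one₀ hp0.le hp1.le
        · apply pow_le_pow_left₀ (by nlinarith)
          nlinarith
    _ = (1 / (1 - p)) ^ k := by rw [div_pow, one_pow]

set_option maxHeartbeats 1000000 in
lemma key_conv (hp0 : 0 < p) (hp1 : p < 1) (k : ℕ) :
    (∑ x ∈ Finset.HasAntidiagonal.antidiagonal k, a2 p x.1 * b2 p x.2) = g2 p k := by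
  set C : ℝ := 1 / (1 - p) with hC
  have h1p : (0:ℝ) < 1 - p := by linarith
  have hC1 : 1 ≤ C := by
    rw [hC, le_div_iff₀ h1p]
    linarith
  set d : ℕ → ℂ := fun k => (∑ x ∈ Finset.HasAntidiagonal.antidiagonal k, a2 p x.1 * b2 p x.2) - g2 p k with hd
  have hbd : ∀ k, ‖d k‖ ≤ 2 * (2 * C) ^ k := by
    intro k
    have hconv : ‖∑ x ∈ Finset.HasAntidiagonal.antidiagonal k, a2 p x.1 * b2 p x.2‖ ≤ (k + 1 : ℝ) * C ^ k := by
      calc ‖∑ x ∈ Finset.HasAntidiagonal.antidiagonal k, a2 p x.1 * b2 p x.2‖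
          ≤ ∑ x ∈ Finset.HasAntidiagonal.antidiagonal k, ‖a2 p x.1 * b2 p x.2‖ := norm_sum_le _ _
        _ ≤ ∑ _x ∈ Finset.HasAntidiagonal.antidiagonal k, C ^ k := by
            apply Finset.sum_le_sum
            intro x hx
            rw [norm_mul]
            have h1 := norm_a2_le hp0 hp1 x.1
            have h2 := norm_b2_le hp0 hp1 x.2
            calc ‖a2 p x.1‖ * ‖b2 p x.2‖ ≤ C ^ x.1 * C ^ x.2 := by
                  apply mul_le_mul h1 h2 (norm_nonneg _) (by positivity)
              _ = C ^ k := by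
                  rw [← pow_add, Finset.HasAntidiagonal.mem_antidiagonal.mp hx]
        _ = (k + 1 : ℝ) * C ^ k := by
            rw [Finset.sum_const, Finset.Nat.card_antidiagonal]
            simp [add_comm]
    have hk2 : (k + 1 : ℝ) ≤ 2 ^ k := by
      have := Nat.lt_two_pow_self (n := k)
      exact_mod_cast Nat.succ_le_of_lt this
    calc ‖d k‖ ≤ ‖∑ x ∈ Finset.HasAntidiagonal.antidiagonal k, a2 p x.1 * b2 p x.2‖ + ‖g2 p k‖ :=
          norm_sub_le _ _
      _ ≤ (k + 1 : ℝ) * C ^ k + C ^ k := by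
          exact add_le_add hconv (norm_g2_le hp0 hp1 k)
      _ ≤ 2 ^ k * C ^ k + C ^ k := by
          apply add_le_add_left (mul_le_mul_of_nonneg_right hk2 (by positivity))
      _ ≤ 2 * (2 * C) ^ k := by
          rw [mul_pow]
          have hCk : (1:ℝ) * C ^ k ≤ 2 ^ k * C ^ k := by
            apply mul_le_mul_of_nonneg_right _ (by positivity)
            exact one_le_pow₀ (by norm_num)
          nlinarith [pow_nonneg (by positivity : (0:ℝ) ≤ 2 * C) k]
  have hzero : ∀ t : ℝ, 0 < t → t < 1/2 → (∑' k, d k * (t : ℂ) ^ k) = 0 := by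
    intro t ht0 ht12
    have ht1 : t < 1 := by linarith
    have hp20 : (0:ℝ) < p ^ 2 := by positivity
    have hp21 : p ^ 2 < 1 := by nlinarith
    -- nonzero factors
    have hnzt : ∀ k : ℕ, 1 - (t : ℂ) * (p : ℂ) ^ k ≠ 0 := by
      intro k
      have he : (1 : ℂ) - (t : ℂ) * (p : ℂ) ^ k = ((1 - t * p ^ k : ℝ) : ℂ) := by push_cast; ring
      rw [he]
      rw [Complex.ofReal_ne_zero]
      have h1 : t * p ^ k ≤ t * 1 := by
        apply mul_le_mul_of_nonneg_left (pow_le_one₀ hp0.le hp1.le) ht0.le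
      nlinarith
    -- identify the three series
    have hA : ∀ n : ℕ, a2 p n * (t : ℂ) ^ n = et p (t : ℂ) n := by
      intro n
      unfold a2 et
      ring
    have hB : ∀ m : ℕ, b2 p m * (t : ℂ) ^ m = gt (p ^ 2) ((t : ℂ) * (p : ℂ)) m := by
      intro m
      unfold b2 gt
      rw [hco]
      rw [mul_pow]
      ring
    have hG : ∀ k : ℕ, g2 p k * (t : ℂ) ^ k = et (p ^ 2) (t : ℂ) k := by
      intro k
      unfold g2 et
      rw [hco]
      rw [← pow_mul]
      ring
    have hsa : Summable (fun n => ‖a2 p n * (t : ℂ) ^ n‖) := by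
      simp only [hA]
      exact summable_norm_et hp0 hp1 _
    have hnormtp : ‖(t : ℂ) * (p : ℂ)‖ < 1 := by
      rw [norm_mul, Complex.norm_real, Complex.norm_real,
        Real.norm_of_nonneg ht0.le, Real.norm_of_nonneg hp0.le]
      nlinarith
    have hsb : Summable (fun m => ‖b2 p m * (t : ℂ) ^ m‖) := by
      simp only [hB]
      exact summable_norm_gt hp20 hp21 hnormtp
    have hsg : Summable (fun k => ‖g2 p k * (t : ℂ) ^ k‖) := by
      simp only [hG]
      exact summable_norm_et hp20 hp21 _
    -- Cauchy product
    have hcauchy := tsum_mul_tsum_eq_tsum_sum_antidiagonal_of_summable_norm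
      (f := fun n => a2 p n * (t:ℂ)^n) (g := fun m => b2 p m * (t:ℂ)^m) hsa hsb
    -- rewrite conv terms
    have hconvterm : ∀ k : ℕ,
        (∑ x ∈ Finset.HasAntidiagonal.antidiagonal k, (a2 p x.1 * (t:ℂ) ^ x.1) * (b2 p x.2 * (t:ℂ) ^ x.2)) =
        (∑ x ∈ Finset.HasAntidiagonal.antidiagonal k, a2 p x.1 * b2 p x.2) * (t : ℂ) ^ k := by
      intro k
      rw [Finset.sum_mul]
      apply Finset.sum_congr rfl
      intro x hx
      rw [← Finset.HasAntidiagonal.mem_antidiagonal.mp hx, pow_add]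
      ring
    -- summability of conv series
    have hsprod : Summable (fun x : ℕ × ℕ => (a2 p x.1 * (t:ℂ)^x.1) * (b2 p x.2 * (t:ℂ)^x.2)) :=
      summable_mul_of_summable_norm (f := fun n => a2 p n * (t:ℂ)^n)
        (g := fun m => b2 p m * (t:ℂ)^m) hsa hsb
    have hsconv : Summable (fun k : ℕ =>
        (∑ x ∈ Finset.HasAntidiagonal.antidiagonal k, a2 p x.1 * b2 p x.2) * (t : ℂ) ^ k) := by
      have := summable_sum_mul_antidiagonal_of_summable_mul
        (f := fun n => a2 p n * (t:ℂ)^n) (g := fun m => b2 p m * (t:ℂ)^m) hsprod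
      exact (summable_congr hconvterm).mp this
    have hsgsum : Summable (fun k => g2 p k * (t : ℂ) ^ k) := by
      simp only [hG]
      exact summable_et hp20 hp21 _
    -- the function identity
    have heuler1 : (∑' n, a2 p n * (t:ℂ)^n) = qpiC (p : ℂ) (t : ℂ) := by
      rw [tsum_congr hA]
      exact (euler1 hp0 hp1 hnzt).symm
    have hnzte : ∀ k : ℕ, 1 - (t : ℂ) * ((p^2 : ℝ) : ℂ) ^ k ≠ 0 := by
      intro k
      rw [hco, ← pow_mul]
      exact hnzt (2 * k)
    have hnzto : ∀ k : ℕ, 1 - ((t : ℂ) * (p : ℂ)) * ((p^2 : ℝ) : ℂ) ^ k ≠ 0 := by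
      intro k
      rw [hco, ← pow_mul]
      have h := hnzt (2 * k + 1)
      have e : (t : ℂ) * (p : ℂ) * (p : ℂ) ^ (2 * k) = (t : ℂ) * (p : ℂ) ^ (2 * k + 1) := by
        rw [pow_succ]; ring
      rw [e]
      exact h
    have heuler2 : (∑' m, b2 p m * (t:ℂ)^m) *
        qpiC ((p : ℂ) ^ 2) ((t : ℂ) * (p : ℂ)) = 1 := by
      rw [tsum_congr hB]
      have := euler2 hp20 hp21 hnormtp hnzto
      rw [hco] at this
      rw [mul_comm]
      exact this
    have heulerg : (∑' k, g2 p k * (t:ℂ)^k) = qpiC ((p : ℂ) ^ 2) (t : ℂ) := by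
      rw [tsum_congr hG]
      have := euler1 hp20 hp21 hnzte
      rw [hco] at this
      exact this.symm
    have hsplit : qpiC (p : ℂ) (t : ℂ) =
        qpiC ((p : ℂ) ^ 2) (t : ℂ) * qpiC ((p : ℂ) ^ 2) ((t : ℂ) * (p : ℂ)) :=
      even_odd_split hp0 hp1 hnzt
    -- combine
    have hfinal : (∑' k, (∑ x ∈ Finset.HasAntidiagonal.antidiagonal k, a2 p x.1 * b2 p x.2) * (t : ℂ) ^ k)
        = ∑' k, g2 p k * (t : ℂ) ^ k := by
      have e1 : (∑' k, (∑ x ∈ Finset.HasAntidiagonal.antidiagonal k, a2 p x.1 * b2 p x.2) * (t : ℂ) ^ k)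
          = (∑' n, a2 p n * (t:ℂ)^n) * (∑' m, b2 p m * (t:ℂ)^m) := by
        rw [hcauchy]
        exact (tsum_congr hconvterm).symm
      rw [e1, heuler1, hsplit, heulerg]
      calc qpiC ((p : ℂ) ^ 2) (t : ℂ) * qpiC ((p : ℂ) ^ 2) ((t : ℂ) * (p : ℂ)) *
            (∑' m, b2 p m * (t:ℂ)^m)
          = qpiC ((p : ℂ) ^ 2) (t : ℂ) *
            ((∑' m, b2 p m * (t:ℂ)^m) * qpiC ((p : ℂ) ^ 2) ((t : ℂ) * (p : ℂ))) := by ring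
        _ = qpiC ((p : ℂ) ^ 2) (t : ℂ) := by rw [heuler2, mul_one]
    -- conclude
    simp only [hd]
    rw [tsum_congr (fun k => by
      show ((∑ x ∈ Finset.HasAntidiagonal.antidiagonal k, a2 p x.1 * b2 p x.2) - g2 p k) * (t : ℂ) ^ k =
        (∑ x ∈ Finset.HasAntidiagonal.antidiagonal k, a2 p x.1 * b2 p x.2) * (t : ℂ) ^ k - g2 p k * (t : ℂ) ^ k
      ring)]
    rw [Summable.tsum_sub hsconv hsgsum, hfinal, sub_self]
  have := coeff_ext (by norm_num : (0:ℝ) ≤ 2) (by linarith : 1 ≤ 2 * C) hbd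
    (by norm_num : (0:ℝ) < 1/2) hzero k
  simpa [hd, sub_eq_zero] using this

end AqAux
end G


namespace AqAux

lemma even_e1 (n : ℕ) : 2 ∣ n * (3 * n + 1) := by
  rcases Nat.even_or_odd n with ⟨m, hm⟩ | ⟨m, hm⟩
  · subst hm; exact ⟨m * (3 * (m + m) + 1), by ring⟩
  · subst hm; exact ⟨(2 * m + 1) * (3 * m + 2), by ring⟩

lemma e1_mul_two (n : ℕ) : n * (3 * n + 1) / 2 * 2 = n * (3 * n + 1) :=
  Nat.div_mul_cancel (even_e1 n)

lemma tri_id (k : ℕ) : tri k * 2 + k = k * k := by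
  rw [tri_mul_two]
  rcases k with _ | m
  · simp
  · simp only [Nat.add_sub_cancel]; ring

lemma e1_succ (n : ℕ) : (n + 1) * (3 * (n + 1) + 1) / 2 = n * (3 * n + 1) / 2 + (3 * n + 2) := by
  apply Nat.eq_of_mul_eq_mul_right (show 0 < 2 by norm_num)
  rw [e1_mul_two]
  conv_rhs => rw [add_mul, e1_mul_two]
  ring

lemma hexp (n j : ℕ) :
    n * (3 * n + 1) / 2 + (2 * tri j + (2 * n + 3) * j) =
      ((n + j) ^ 2 + (n + j)) + (tri n + j) := by
  have h1 := e1_mul_two n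
  have h2 : n * (3 * n + 1) = 3 * (n * n) + n := by ring
  have h3 := tri_id n
  have h4 := tri_id j
  have h5 : (n + j) ^ 2 = n * n + 2 * (n * j) + j * j := by ring
  have h6 : (2 * n + 3) * j = 2 * (n * j) + 3 * j := by ring
  omega

lemma exp2 (k : ℕ) : (k ^ 2 + k) + 2 * tri k = 2 * k ^ 2 := by
  have h4 := tri_id k
  have h5 : k ^ 2 = k * k := by ring
  omega

lemma head_split {b : ℝ} (hb0 : 0 < b) (hb1 : b < 1) {c : ℂ}
    (hnz : ∀ k : ℕ, 1 - c * (b : ℂ) ^ k ≠ 0) (n : ℕ) :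
    qpiC (b : ℂ) c = qpC (b : ℂ) c n * qpiC (b : ℂ) (c * (b : ℂ) ^ n) := by
  have hnz2 : ∀ k : ℕ, 1 - c * (b : ℂ) ^ n * (b : ℂ) ^ k ≠ 0 := by
    intro k; rw [mul_assoc, ← pow_add]; exact hnz (n + k)
  rw [euler1 hb0 hb1 hnz, iterate_et hb0 hb1 c n, ← euler1 hb0 hb1 hnz2]

lemma norm_et_le {b : ℝ} (hb0 : 0 < b) (hb1 : b < 1) (c : ℂ) (j : ℕ) :
    ‖et b c j‖ ≤ b ^ tri j * (‖c‖ / (1 - b)) ^ j := by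
  have h1b : (0:ℝ) < 1 - b := by linarith
  calc ‖et b c j‖ ≤ ‖(-1 : ℂ) ^ j * (b : ℂ) ^ tri j * c ^ j‖ / (1 - b) ^ j :=
        norm_div_qpC_le hb0.le hb1 _ j
    _ = b ^ tri j * ‖c‖ ^ j / (1 - b) ^ j := by
        rw [norm_mul, norm_mul, norm_pow, norm_pow, norm_pow, norm_neg, norm_one, one_pow,
          one_mul, Complex.norm_real, Real.norm_of_nonneg hb0.le]
    _ = b ^ tri j * (‖c‖ / (1 - b)) ^ j := by rw [div_pow]; ring

end AqAux

open AqAux in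
theorem Aq_expansion_43 (q : ℝ) (hq0 : 0 < q) (hq1 : q < 1) (w : ℂ)
    (hden : ∀ n : ℕ, qpC (q : ℂ) (-w * (q : ℂ) * (Real.sqrt q : ℂ)) n ≠ 0) :
    Aq q w =
      qpiC (q : ℂ) (-w * (q : ℂ) * (Real.sqrt q : ℂ)) *
        ∑' n : ℕ, (Real.sqrt q : ℂ) ^ (n * (3 * n + 1) / 2) * (-w) ^ n /
          (qpC (Real.sqrt q : ℂ) (Real.sqrt q : ℂ) n *
            qpC (q : ℂ) (-w * (q : ℂ) * (Real.sqrt q : ℂ)) n) := by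
  set p := Real.sqrt q with hp
  have hp0 : 0 < p := Real.sqrt_pos.mpr hq0
  have hp1 : p < 1 := by rw [hp, ← Real.sqrt_one]; exact Real.sqrt_lt_sqrt hq0.le hq1
  have h1p : (0:ℝ) < 1 - p := by linarith
  have hq2 : (q : ℂ) = (p : ℂ) ^ 2 := by
    norm_cast
    rw [hp]
    exact (Real.sq_sqrt hq0.le).symm
  have hp20 : 0 < p ^ 2 := by positivity
  have hp21 : p ^ 2 < 1 := by nlinarith
  set A : ℂ := -w * (q : ℂ) * (p : ℂ) with hA
  simp only [hq2] at hden
  unfold Aq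
  simp only [hq2]
  -- nonzero denominators and factors
  have hqpA_ne : ∀ n : ℕ, qpC ((p : ℂ) ^ 2) A n ≠ 0 := hden
  have hfac : ∀ k : ℕ, 1 - A * ((p : ℂ) ^ 2) ^ k ≠ 0 := by
    intro k h0
    apply hden (k + 1)
    rw [qpC_succ, h0, mul_zero]
  have hfacR : ∀ k : ℕ, 1 - A * ((p ^ 2 : ℝ) : ℂ) ^ k ≠ 0 := by
    intro k; rw [hco]; exact hfac k
  have hpne : ∀ n : ℕ, qpC (p : ℂ) (p : ℂ) n ≠ 0 := fun n => qpC_real_ne hp0.le hp1 n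
  have hp2ne : ∀ n : ℕ, qpC ((p : ℂ) ^ 2) ((p : ℂ) ^ 2) n ≠ 0 := by
    intro n
    have := qpC_real_ne hp20.le hp21 (b := p ^ 2) n
    rwa [hco] at this
  -- head split instantiated
  have hsplitn : ∀ n : ℕ, qpiC ((p : ℂ) ^ 2) A =
      qpC ((p : ℂ) ^ 2) A n * qpiC ((p : ℂ) ^ 2) (A * ((p : ℂ) ^ 2) ^ n) := by
    intro n
    have := head_split hp20 hp21 hfacR n
    rwa [hco] at this
  -- euler expansion of tails
  have htail : ∀ n : ℕ, qpiC ((p : ℂ) ^ 2) (A * ((p : ℂ) ^ 2) ^ n) =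
      ∑' j, et (p ^ 2) (A * ((p : ℂ) ^ 2) ^ n) j := by
    intro n
    have hnzn : ∀ k : ℕ, 1 - A * ((p : ℂ) ^ 2) ^ n * ((p ^ 2 : ℝ) : ℂ) ^ k ≠ 0 := by
      intro k; rw [hco, mul_assoc, ← pow_add]; exact hfac (n + k)
    have := euler1 hp20 hp21 hnzn
    rwa [hco] at this
  -- the double-indexed term
  set T : ℕ × ℕ → ℂ := fun x =>
    (p : ℂ) ^ (x.1 * (3 * x.1 + 1) / 2) * (-w) ^ x.1 / qpC (p : ℂ) (p : ℂ) x.1 *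
      et (p ^ 2) (A * ((p : ℂ) ^ 2) ^ x.1) x.2 with hT
  -- summability of T
  have hU : Summable (fun n => p ^ (n * (3 * n + 1) / 2) * (‖w‖ / (1 - p)) ^ n) := by
    have hp30 : (0:ℝ) ≤ p ^ 3 := by positivity
    have hp31 : p ^ 3 < 1 := by nlinarith
    apply summable_master (u := fun n => (p ^ 3) ^ n * (p ^ 2 * (‖w‖ / (1 - p))))
      (L := 0) (by norm_num)
    · simpa [mul_comm] using tendsto_cb_zero hp30 hp31 (p ^ 2 * (‖w‖ / (1 - p)))
    · have unn : ∀ n : ℕ, (0:ℝ) ≤ p ^ (n * (3 * n + 1) / 2) * (‖w‖ / (1 - p)) ^ n := fun n =>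
        mul_nonneg (pow_nonneg hp0.le _)
          (pow_nonneg (div_nonneg (norm_nonneg _) h1p.le) _)
      apply Filter.Eventually.of_forall
      intro n
      have he : p ^ ((n + 1) * (3 * (n + 1) + 1) / 2) * (‖w‖ / (1 - p)) ^ (n + 1) =
          (p ^ 3) ^ n * (p ^ 2 * (‖w‖ / (1 - p))) *
            (p ^ (n * (3 * n + 1) / 2) * (‖w‖ / (1 - p)) ^ n) := by
        have h3 : p ^ (3 * n + 2) = (p ^ 3) ^ n * p ^ 2 := by
          rw [pow_add, pow_mul]
        rw [e1_succ, pow_add, h3]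
        ring
      rw [Real.norm_of_nonneg (by positivity), Real.norm_of_nonneg (by positivity), he]
  have h1p2 : (0:ℝ) < 1 - p ^ 2 := by nlinarith
  have hV : Summable (fun j => (p ^ 2) ^ tri j * (‖A‖ / (1 - p ^ 2)) ^ j) := by
    have hp40 : (0:ℝ) ≤ p ^ 2 := by positivity
    apply summable_master (u := fun j => (p ^ 2) ^ j * (‖A‖ / (1 - p ^ 2)))
      (L := 0) (by norm_num)
    · simpa [mul_comm] using tendsto_cb_zero hp40 hp21 (‖A‖ / (1 - p ^ 2))
    · have vnn : ∀ j : ℕ, (0:ℝ) ≤ (p ^ 2) ^ tri j * (‖A‖ / (1 - p ^ 2)) ^ j := fun j =>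
        mul_nonneg (pow_nonneg hp20.le _)
          (pow_nonneg (div_nonneg (norm_nonneg _) h1p2.le) _)
      apply Filter.Eventually.of_forall
      intro j
      have he : (p ^ 2) ^ tri (j + 1) * (‖A‖ / (1 - p ^ 2)) ^ (j + 1) =
          (p ^ 2) ^ j * (‖A‖ / (1 - p ^ 2)) *
            ((p ^ 2) ^ tri j * (‖A‖ / (1 - p ^ 2)) ^ j) := by
        rw [tri_succ, pow_add]
        ring
      rw [Real.norm_of_nonneg (vnn (j+1)), Real.norm_of_nonneg (vnn j), he]
  have hTbound : ∀ x : ℕ × ℕ,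
      ‖T x‖ ≤ (p ^ (x.1 * (3 * x.1 + 1) / 2) * (‖w‖ / (1 - p)) ^ x.1) *
        ((p ^ 2) ^ tri x.2 * (‖A‖ / (1 - p ^ 2)) ^ x.2) := by
    intro x
    obtain ⟨n, j⟩ := x
    simp only [hT]
    rw [norm_mul]
    apply mul_le_mul
    · calc ‖(p : ℂ) ^ (n * (3 * n + 1) / 2) * (-w) ^ n / qpC (p : ℂ) (p : ℂ) n‖
          ≤ ‖(p : ℂ) ^ (n * (3 * n + 1) / 2) * (-w) ^ n‖ / (1 - p) ^ n :=
            norm_div_qpC_le hp0.le hp1 _ n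
        _ = p ^ (n * (3 * n + 1) / 2) * ‖w‖ ^ n / (1 - p) ^ n := by
            rw [norm_mul, norm_pow, norm_pow, norm_neg, Complex.norm_real,
              Real.norm_of_nonneg hp0.le]
        _ = p ^ (n * (3 * n + 1) / 2) * (‖w‖ / (1 - p)) ^ n := by rw [div_pow]; ring
    · calc ‖et (p ^ 2) (A * ((p : ℂ) ^ 2) ^ n) j‖
          ≤ (p ^ 2) ^ tri j * (‖A * ((p : ℂ) ^ 2) ^ n‖ / (1 - p ^ 2)) ^ j :=
            norm_et_le hp20 hp21 _ j
        _ ≤ (p ^ 2) ^ tri j * (‖A‖ / (1 - p ^ 2)) ^ j := by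
            apply mul_le_mul_of_nonneg_left _ (pow_nonneg hp20.le _)
            apply pow_le_pow_left₀ (div_nonneg (norm_nonneg _) h1p2.le)
            apply div_le_div_of_nonneg_right _ h1p2.le
            rw [norm_mul]
            calc ‖A‖ * ‖((p : ℂ) ^ 2) ^ n‖ ≤ ‖A‖ * 1 := by
                  apply mul_le_mul_of_nonneg_left _ (norm_nonneg _)
                  rw [norm_pow, norm_pow, Complex.norm_real, Real.norm_of_nonneg hp0.le]
                  exact pow_le_one₀ (by positivity) (by nlinarith)
              _ = ‖A‖ := mul_one _
    · exact norm_nonneg _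
    · exact mul_nonneg (pow_nonneg hp0.le _)
        (pow_nonneg (div_nonneg (norm_nonneg _) h1p.le) _)
  have hTsum : Summable T :=
    Summable.of_norm_bounded (hU.mul_of_nonneg hV
      (fun n => mul_nonneg (pow_nonneg hp0.le _)
        (pow_nonneg (div_nonneg (norm_nonneg _) h1p.le) _))
      (fun j => mul_nonneg (pow_nonneg hp20.le _)
        (pow_nonneg (div_nonneg (norm_nonneg _) h1p2.le) _))) hTbound
  -- the key multiplication step
  have key : qpiC ((p : ℂ) ^ 2) A *
      ∑' n : ℕ, (p : ℂ) ^ (n * (3 * n + 1) / 2) * (-w) ^ n /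
        (qpC (p : ℂ) (p : ℂ) n * qpC ((p : ℂ) ^ 2) A n) =
      ∑' k : ℕ, ((p : ℂ) ^ 2) ^ k ^ 2 * (-w) ^ k / qpC ((p : ℂ) ^ 2) ((p : ℂ) ^ 2) k := by
    calc qpiC ((p : ℂ) ^ 2) A *
        ∑' n : ℕ, (p : ℂ) ^ (n * (3 * n + 1) / 2) * (-w) ^ n /
          (qpC (p : ℂ) (p : ℂ) n * qpC ((p : ℂ) ^ 2) A n)
        = ∑' n : ℕ, qpiC ((p : ℂ) ^ 2) A *
            ((p : ℂ) ^ (n * (3 * n + 1) / 2) * (-w) ^ n /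
              (qpC (p : ℂ) (p : ℂ) n * qpC ((p : ℂ) ^ 2) A n)) := tsum_mul_left.symm
      _ = ∑' n : ℕ, ∑' j : ℕ, T (n, j) := by
          apply tsum_congr
          intro n
          rw [hsplitn n, htail n]
          rw [mul_comm (qpC ((p : ℂ) ^ 2) A n) (∑' j, et (p ^ 2) (A * ((p : ℂ) ^ 2) ^ n) j),
            mul_assoc, ← tsum_mul_right]
          apply tsum_congr
          intro j
          simp only [hT]
          have hd1 := hpne n
          have hd2 := hqpA_ne n
          field_simp
      _ = ∑' x : ℕ × ℕ, T x := (Summable.tsum_prod' hTsum hTsum.prod_factor).symm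
      _ = ∑' k : ℕ, ∑ x ∈ Finset.HasAntidiagonal.antidiagonal k, T x := by
          rw [← Finset.HasAntidiagonal.sigmaAntidiagonalEquivProd.tsum_eq T]
          have hTs : Summable (T ∘ (Finset.HasAntidiagonal.sigmaAntidiagonalEquivProd (A := ℕ))) :=
            Finset.HasAntidiagonal.sigmaAntidiagonalEquivProd.summable_iff.mpr hTsum
          rw [Summable.tsum_sigma (f := fun σ : Σ n : ℕ, {x // x ∈ Finset.HasAntidiagonal.antidiagonal n} =>
            T (Finset.HasAntidiagonal.sigmaAntidiagonalEquivProd σ)) hTs]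
          apply tsum_congr
          intro k
          rw [tsum_fintype]
          exact Finset.sum_coe_sort (Finset.HasAntidiagonal.antidiagonal k) T
      _ = ∑' k : ℕ, ((p : ℂ) ^ 2) ^ k ^ 2 * (-w) ^ k / qpC ((p : ℂ) ^ 2) ((p : ℂ) ^ 2) k := by
          apply tsum_congr
          intro k
          have hterm : ∀ x ∈ Finset.HasAntidiagonal.antidiagonal k,
              T x = w ^ k * (p : ℂ) ^ (k ^ 2 + k) * (a2 p x.1 * b2 p x.2) := by
            intro x hx
            obtain ⟨n, j⟩ := x
            have hnj : n + j = k := Finset.HasAntidiagonal.mem_antidiagonal.mp hx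
            subst hnj
            simp only [hT, et, a2, b2]
            rw [hco, hA, hq2]
            have hAc : -w * (p : ℂ) ^ 2 * (p : ℂ) * ((p : ℂ) ^ 2) ^ n =
                -w * (p : ℂ) ^ (2 * n + 3) := by ring
            rw [hAc, mul_pow (-w) ((p : ℂ) ^ (2 * n + 3)) j]
            rw [← pow_mul (p : ℂ) (2 * n + 3) j, ← pow_mul (p : ℂ) 2 (tri j)]
            rw [div_mul_div_comm, div_mul_div_comm, ← mul_div_assoc]
            congr 1
            have hsign : (-1 : ℂ) ^ j * (-w) ^ j = w ^ j := by
              rw [← mul_pow, neg_one_mul, neg_neg]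
            have hnegw : (-w : ℂ) ^ n = (-1 : ℂ) ^ n * w ^ n := neg_pow w n
            calc (p : ℂ) ^ (n * (3 * n + 1) / 2) * (-w) ^ n *
                  ((-1) ^ j * (p : ℂ) ^ (2 * tri j) * ((-w) ^ j * (p : ℂ) ^ ((2 * n + 3) * j)))
                = ((-1 : ℂ) ^ j * (-w) ^ j) * ((-w) ^ n *
                    ((p : ℂ) ^ (n * (3 * n + 1) / 2) *
                      ((p : ℂ) ^ (2 * tri j) * (p : ℂ) ^ ((2 * n + 3) * j)))) := by ring
              _ = w ^ j * (((-1 : ℂ) ^ n * w ^ n) *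
                    (p : ℂ) ^ (n * (3 * n + 1) / 2 + (2 * tri j + (2 * n + 3) * j))) := by
                  rw [hsign, hnegw, ← pow_add, ← pow_add]
              _ = w ^ j * (((-1 : ℂ) ^ n * w ^ n) *
                    (p : ℂ) ^ (((n + j) ^ 2 + (n + j)) + (tri n + j))) := by
                  rw [hexp]
              _ = w ^ (n + j) * (p : ℂ) ^ ((n + j) ^ 2 + (n + j)) *
                    ((-1) ^ n * (p : ℂ) ^ tri n * (p : ℂ) ^ j) := by
                  rw [pow_add, pow_add w]
                  ring
          rw [Finset.sum_congr rfl hterm, ← Finset.mul_sum, key_conv hp0 hp1 k]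
          simp only [g2]
          have hE : ((p : ℂ) ^ 2) ^ k ^ 2 = (p : ℂ) ^ (k ^ 2 + k) * (p : ℂ) ^ (2 * tri k) := by
            rw [← pow_add, exp2, pow_mul]
          rw [hE]
          have hnegw : (-w : ℂ) ^ k = (-1 : ℂ) ^ k * w ^ k := neg_pow w k
          rw [hnegw]
          ring
  rw [key]
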